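/- arXiv:2112.08465 — 2 statements merged into one kernel-verified Lean document; each statement's English description precedes it below -/
import Mathlib

section
/- Let (V,⟨·,·⟩) be a real inner product space of dimension n ≥ 4 and let R be an algebraic curvature tensor on V having n-positive curvature operator of the second kind. Then the scalar curvature S of R is positive, and Ric(v,v) > S/(n(n+1)) for every unit vector v ∈ V. -/
open scoped RealInnerProductSpace

variable {V : Type*} [NormedAddCommGroup V] [InnerProductSpace ℝ V]

/-- `R` is an algebraic curvature tensor: antisymmetric in the first two slots,
symmetric under exchange of the first and second pairs, and satisfying the
first Bianchi identity. -/
def IsAlgCurvatureTensor (R : V →ₗ[ℝ] V →ₗ[ℝ] V →ₗ[ℝ] V →ₗ[ℝ] ℝ) : Prop :=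
  (∀ x y z w : V, R x y z w = - R y x z w) ∧
  (∀ x y z w : V, R x y z w = R z w x y) ∧
  (∀ x y z w : V, R x y z w + R y z x w + R z x y w = 0)

/-- The Ricci curvature `Ric(x,y) = Σ_j R(x,e_j,y,e_j)` with respect to an
orthonormal basis. -/
noncomputable def ricci {n : ℕ} (b : OrthonormalBasis (Fin n) ℝ V)
    (R : V →ₗ[ℝ] V →ₗ[ℝ] V →ₗ[ℝ] V →ₗ[ℝ] ℝ) (x y : V) : ℝ :=
  ∑ j, R x (b j) y (b j)

/-- The scalar curvature `S = Σ_{i,j} R_{ijij}`. -/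
noncomputable def scalarCurv {n : ℕ} (b : OrthonormalBasis (Fin n) ℝ V)
    (R : V →ₗ[ℝ] V →ₗ[ℝ] V →ₗ[ℝ] V →ₗ[ℝ] ℝ) : ℝ :=
  ∑ i, ∑ j, R (b i) (b j) (b i) (b j)

/-- `φ` is a symmetric bilinear form which is traceless with respect to the
orthonormal basis `b`. -/
def IsTracelessSymForm {n : ℕ} (b : OrthonormalBasis (Fin n) ℝ V)
    (φ : V →ₗ[ℝ] V →ₗ[ℝ] ℝ) : Prop :=
  (∀ x y : V, φ x y = φ y x) ∧ (∑ i, φ (b i) (b i) = 0)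

/-- The inner product `⟨φ,ψ⟩ = Σ_{i,j} φ(e_i,e_j) ψ(e_i,e_j)` of bilinear forms. -/
noncomputable def formInner {n : ℕ} (b : OrthonormalBasis (Fin n) ℝ V)
    (φ ψ : V →ₗ[ℝ] V →ₗ[ℝ] ℝ) : ℝ :=
  ∑ i, ∑ j, φ (b i) (b j) * ψ (b i) (b j)

/-- The curvature operator of the second kind
`R̊(φ,ψ) = Σ_{i,j,k,l} R_{ijkl} φ(e_i,e_l) ψ(e_j,e_k)`. -/
noncomputable def secondKind {n : ℕ} (b : OrthonormalBasis (Fin n) ℝ V)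
    (R : V →ₗ[ℝ] V →ₗ[ℝ] V →ₗ[ℝ] V →ₗ[ℝ] ℝ)
    (φ ψ : V →ₗ[ℝ] V →ₗ[ℝ] ℝ) : ℝ :=
  ∑ i, ∑ j, ∑ k, ∑ l,
    R (b i) (b j) (b k) (b l) * φ (b i) (b l) * ψ (b j) (b k)

/-- `R` has `k`-nonnegative curvature operator of the second kind:
`Σ_{a=1}^k R̊(φ_a,φ_a) ≥ 0` for every orthonormal `k`-tuple of traceless
symmetric bilinear forms. -/
def kNonnegSecondKind {n : ℕ} (b : OrthonormalBasis (Fin n) ℝ V)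
    (R : V →ₗ[ℝ] V →ₗ[ℝ] V →ₗ[ℝ] V →ₗ[ℝ] ℝ) (k : ℕ) : Prop :=
  ∀ φ : Fin k → (V →ₗ[ℝ] V →ₗ[ℝ] ℝ),
    (∀ a, IsTracelessSymForm b (φ a)) →
    (∀ a a', formInner b (φ a) (φ a') = if a = a' then 1 else 0) →
    0 ≤ ∑ a, secondKind b R (φ a) (φ a)

/-- `R` has `k`-positive curvature operator of the second kind:
`Σ_{a=1}^k R̊(φ_a,φ_a) > 0` for every orthonormal `k`-tuple of traceless
symmetric bilinear forms. -/
def kPosSecondKind {n : ℕ} (b : OrthonormalBasis (Fin n) ℝ V)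
    (R : V →ₗ[ℝ] V →ₗ[ℝ] V →ₗ[ℝ] V →ₗ[ℝ] ℝ) (k : ℕ) : Prop :=
  ∀ φ : Fin k → (V →ₗ[ℝ] V →ₗ[ℝ] ℝ),
    (∀ a, IsTracelessSymForm b (φ a)) →
    (∀ a a', formInner b (φ a) (φ a') = if a = a' then 1 else 0) →
    0 < ∑ a, secondKind b R (φ a) (φ a)


section Aux

variable {n : ℕ} (b : OrthonormalBasis (Fin n) ℝ V)
  (R : V →ₗ[ℝ] V →ₗ[ℝ] V →ₗ[ℝ] V →ₗ[ℝ] ℝ)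

lemma contract1' (f : V →ₗ[ℝ] ℝ) (x : V) :
    ∑ j, f (b j) * ⟪b j, x⟫ = f x := by
  conv_rhs => rw [← b.sum_repr' x]
  rw [map_sum]
  simp [smul_eq_mul, mul_comm]

lemma pars (x y : V) : ∑ i, ⟪b i, x⟫ * ⟪b i, y⟫ = ⟪x, y⟫ := by
  rw [← b.sum_inner_mul_inner x y]
  exact Finset.sum_congr rfl fun i _ => by rw [real_inner_comm x (b i)]

lemma sum2_congr {f g : Fin n → Fin n → ℝ}
    (h : ∀ i j, f i j = g i j) :
    (∑ i, ∑ j, f i j) = ∑ i, ∑ j, g i j :=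
  Finset.sum_congr rfl fun i _ => Finset.sum_congr rfl fun j _ => h i j

lemma sum3_congr {f g : Fin n → Fin n → Fin n → ℝ}
    (h : ∀ i j k, f i j k = g i j k) :
    (∑ i, ∑ j, ∑ k, f i j k) = ∑ i, ∑ j, ∑ k, g i j k :=
  Finset.sum_congr rfl fun i _ => Finset.sum_congr rfl fun j _ =>
    Finset.sum_congr rfl fun k _ => h i j k

lemma sum4_congr {f g : Fin n → Fin n → Fin n → Fin n → ℝ}
    (h : ∀ i j k l, f i j k l = g i j k l) :
    (∑ i, ∑ j, ∑ k, ∑ l, f i j k l) = ∑ i, ∑ j, ∑ k, ∑ l, g i j k l :=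
  Finset.sum_congr rfl fun i _ => Finset.sum_congr rfl fun j _ =>
    Finset.sum_congr rfl fun k _ => Finset.sum_congr rfl fun l _ => h i j k l

/-- fully contracted quadruple sum -/
lemma quad (x y z w : V) :
    (∑ i, ∑ j, ∑ k, ∑ l,
      R (b i) (b j) (b k) (b l) * ⟪b i, x⟫ * ⟪b j, y⟫ * ⟪b k, z⟫ * ⟪b l, w⟫)
      = R x y z w := by
  have h4 : ∀ i j k, (∑ l,
      R (b i) (b j) (b k) (b l) * ⟪b i, x⟫ * ⟪b j, y⟫ * ⟪b k, z⟫ * ⟪b l, w⟫)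
      = R (b i) (b j) (b k) w * ⟪b i, x⟫ * ⟪b j, y⟫ * ⟪b k, z⟫ := by
    intro i j k
    have : (∑ l,
        R (b i) (b j) (b k) (b l) * ⟪b i, x⟫ * ⟪b j, y⟫ * ⟪b k, z⟫ * ⟪b l, w⟫)
        = (∑ l, R (b i) (b j) (b k) (b l) * ⟪b l, w⟫) * (⟪b i, x⟫ * ⟪b j, y⟫ * ⟪b k, z⟫) := by
      rw [Finset.sum_mul]
      exact Finset.sum_congr rfl fun l _ => by ring
    rw [this, contract1' b (R (b i) (b j) (b k)) w]; ring
  have h3 : ∀ i j, (∑ k,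
      R (b i) (b j) (b k) w * ⟪b i, x⟫ * ⟪b j, y⟫ * ⟪b k, z⟫)
      = R (b i) (b j) z w * ⟪b i, x⟫ * ⟪b j, y⟫ := by
    intro i j
    have : (∑ k, R (b i) (b j) (b k) w * ⟪b i, x⟫ * ⟪b j, y⟫ * ⟪b k, z⟫)
        = (∑ k, ((R (b i) (b j)).flip w) (b k) * ⟪b k, z⟫) * (⟪b i, x⟫ * ⟪b j, y⟫) := by
      rw [Finset.sum_mul]
      exact Finset.sum_congr rfl fun k _ => by simp [LinearMap.flip_apply]; ring
    rw [this, contract1' b ((R (b i) (b j)).flip w) z]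
    simp [LinearMap.flip_apply]; ring
  have h2 : ∀ i, (∑ j, R (b i) (b j) z w * ⟪b i, x⟫ * ⟪b j, y⟫)
      = R (b i) y z w * ⟪b i, x⟫ := by
    intro i
    have : (∑ j, R (b i) (b j) z w * ⟪b i, x⟫ * ⟪b j, y⟫)
        = (∑ j, (((R (b i)).flip z).flip w) (b j) * ⟪b j, y⟫) * ⟪b i, x⟫ := by
      rw [Finset.sum_mul]
      exact Finset.sum_congr rfl fun j _ => by simp [LinearMap.flip_apply]; ring
    rw [this, contract1' b (((R (b i)).flip z).flip w) y]
    simp [LinearMap.flip_apply]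
  have h1 : (∑ i, R (b i) y z w * ⟪b i, x⟫) = R x y z w := by
    have : (∑ i, R (b i) y z w * ⟪b i, x⟫)
        = ∑ i, (((R.flip y).flip z).flip w) (b i) * ⟪b i, x⟫ := by
      exact Finset.sum_congr rfl fun i _ => by simp [LinearMap.flip_apply]
    rw [this, contract1' b (((R.flip y).flip z).flip w) x]
    simp [LinearMap.flip_apply]
  calc (∑ i, ∑ j, ∑ k, ∑ l,
      R (b i) (b j) (b k) (b l) * ⟪b i, x⟫ * ⟪b j, y⟫ * ⟪b k, z⟫ * ⟪b l, w⟫)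
      = ∑ i, ∑ j, ∑ k, R (b i) (b j) (b k) w * ⟪b i, x⟫ * ⟪b j, y⟫ * ⟪b k, z⟫ :=
        sum3_congr fun i j k => h4 i j k
    _ = ∑ i, ∑ j, R (b i) (b j) z w * ⟪b i, x⟫ * ⟪b j, y⟫ :=
        sum2_congr fun i j => h3 i j
    _ = ∑ i, R (b i) y z w * ⟪b i, x⟫ :=
        Finset.sum_congr rfl fun i _ => h2 i
    _ = R x y z w := h1



noncomputable def Pf (u w : V) : V →ₗ[ℝ] V →ₗ[ℝ] ℝ :=
  LinearMap.mk₂ ℝ (fun x y => ⟪x, u⟫ * ⟪y, w⟫)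
    (fun x x' y => by rw [inner_add_left]; ring)
    (fun r x y => by rw [real_inner_smul_left, smul_eq_mul]; ring)
    (fun x y y' => by rw [inner_add_left]; ring)
    (fun r x y => by rw [real_inner_smul_left, smul_eq_mul]; ring)

noncomputable def Gf : V →ₗ[ℝ] V →ₗ[ℝ] ℝ :=
  LinearMap.mk₂ ℝ (fun x y => ⟪x, y⟫)
    (fun x x' y => by rw [inner_add_left])
    (fun r x y => by rw [real_inner_smul_left, smul_eq_mul])
    (fun x y y' => by rw [inner_add_right])
    (fun r x y => by rw [real_inner_smul_right, smul_eq_mul])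

@[simp] lemma Pf_apply (u w x y : V) : Pf u w x y = ⟪x, u⟫ * ⟪y, w⟫ := rfl
@[simp] lemma Gf_apply (x y : V) : Gf x y = ⟪x, y⟫ := rfl

variable (φ φ' ψ ψ' : V →ₗ[ℝ] V →ₗ[ℝ] ℝ) (r : ℝ)

lemma fi_add_left : formInner b (φ + φ') ψ = formInner b φ ψ + formInner b φ' ψ := by
  simp [formInner, LinearMap.add_apply, add_mul, Finset.sum_add_distrib]

lemma fi_sub_left : formInner b (φ - φ') ψ = formInner b φ ψ - formInner b φ' ψ := by
  simp [formInner, LinearMap.sub_apply, sub_mul, Finset.sum_sub_distrib]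

lemma fi_smul_left : formInner b (r • φ) ψ = r * formInner b φ ψ := by
  simp only [formInner, LinearMap.smul_apply, smul_eq_mul, Finset.mul_sum]
  exact sum2_congr fun i j => by ring

lemma fi_add_right : formInner b φ (ψ + ψ') = formInner b φ ψ + formInner b φ ψ' := by
  simp [formInner, LinearMap.add_apply, mul_add, Finset.sum_add_distrib]

lemma fi_sub_right : formInner b φ (ψ - ψ') = formInner b φ ψ - formInner b φ ψ' := by
  simp [formInner, LinearMap.sub_apply, mul_sub, Finset.sum_sub_distrib]

lemma fi_smul_right : formInner b φ (r • ψ) = r * formInner b φ ψ := by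
  simp only [formInner, LinearMap.smul_apply, smul_eq_mul, Finset.mul_sum]
  exact sum2_congr fun i j => by ring

lemma sk_add_left : secondKind b R (φ + φ') ψ
    = secondKind b R φ ψ + secondKind b R φ' ψ := by
  simp [secondKind, LinearMap.add_apply, mul_add, add_mul, Finset.sum_add_distrib]

lemma sk_sub_left : secondKind b R (φ - φ') ψ
    = secondKind b R φ ψ - secondKind b R φ' ψ := by
  simp [secondKind, LinearMap.sub_apply, mul_sub, sub_mul, Finset.sum_sub_distrib]

lemma sk_smul_left : secondKind b R (r • φ) ψ = r * secondKind b R φ ψ := by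
  simp only [secondKind, LinearMap.smul_apply, smul_eq_mul, Finset.mul_sum]
  exact sum4_congr fun i j k l => by ring

lemma sk_add_right : secondKind b R φ (ψ + ψ')
    = secondKind b R φ ψ + secondKind b R φ ψ' := by
  simp [secondKind, LinearMap.add_apply, mul_add, add_mul, Finset.sum_add_distrib]

lemma sk_sub_right : secondKind b R φ (ψ - ψ')
    = secondKind b R φ ψ - secondKind b R φ ψ' := by
  simp [secondKind, LinearMap.sub_apply, mul_sub, sub_mul, Finset.sum_sub_distrib]

lemma sk_smul_right : secondKind b R φ (r • ψ) = r * secondKind b R φ ψ := by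
  simp only [secondKind, LinearMap.smul_apply, smul_eq_mul, Finset.mul_sum]
  exact sum4_congr fun i j k l => by ring

-- base values of formInner
lemma fi_Pf_Pf (u w u' w' : V) :
    formInner b (Pf u w) (Pf u' w') = ⟪u, u'⟫ * ⟪w, w'⟫ := by
  have h : ∀ i : Fin n, (∑ j, Pf u w (b i) (b j) * Pf u' w' (b i) (b j))
      = (⟪b i, u⟫ * ⟪b i, u'⟫) * ⟪w, w'⟫ := by
    intro i
    have : (∑ j, Pf u w (b i) (b j) * Pf u' w' (b i) (b j))
        = (⟪b i, u⟫ * ⟪b i, u'⟫) * ∑ j, ⟪b j, w⟫ * ⟪b j, w'⟫ := by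
      rw [Finset.mul_sum]
      exact Finset.sum_congr rfl fun j _ => by simp; ring
    rw [this, pars]
  calc formInner b (Pf u w) (Pf u' w')
      = ∑ i, (⟪b i, u⟫ * ⟪b i, u'⟫) * ⟪w, w'⟫ := Finset.sum_congr rfl fun i _ => h i
    _ = (∑ i, ⟪b i, u⟫ * ⟪b i, u'⟫) * ⟪w, w'⟫ := by rw [Finset.sum_mul]
    _ = ⟪u, u'⟫ * ⟪w, w'⟫ := by rw [pars]

lemma fi_Pf_G (u w : V) : formInner b (Pf u w) Gf = ⟪u, w⟫ := by
  have h : ∀ i : Fin n, (∑ j, Pf u w (b i) (b j) * Gf (b i) (b j))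
      = ⟪b i, u⟫ * ⟪b i, w⟫ := by
    intro i
    have : (∑ j, Pf u w (b i) (b j) * Gf (b i) (b j))
        = ⟪b i, u⟫ * ∑ j, ⟪b j, w⟫ * ⟪b j, b i⟫ := by
      rw [Finset.mul_sum]
      exact Finset.sum_congr rfl fun j _ => by
        simp [real_inner_comm (b i) (b j)]; ring
    rw [this, pars, real_inner_comm w (b i)]
  calc formInner b (Pf u w) Gf
      = ∑ i, ⟪b i, u⟫ * ⟪b i, w⟫ := Finset.sum_congr rfl fun i _ => h i
    _ = ⟪u, w⟫ := pars b u w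

lemma fi_G_Pf (u w : V) : formInner b Gf (Pf u w) = ⟪u, w⟫ := by
  have : formInner b Gf (Pf u w) = formInner b (Pf u w) Gf :=
    sum2_congr fun i j => by ring
  rw [this, fi_Pf_G]

lemma fi_G_G : formInner b Gf Gf = (n : ℝ) := by
  have h : ∀ i : Fin n, (∑ j, Gf (b i) (b j) * Gf (b i) (b j)) = 1 := by
    intro i
    have : (∑ j, Gf (b i) (b j) * Gf (b i) (b j))
        = ∑ j, ⟪b j, b i⟫ * ⟪b j, b i⟫ := by
      exact Finset.sum_congr rfl fun j _ => by simp [real_inner_comm (b i) (b j)]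
    rw [this, pars, real_inner_self_eq_norm_mul_norm, b.orthonormal.1 i]; norm_num
  calc formInner b Gf Gf = ∑ _i : Fin n, (1 : ℝ) := Finset.sum_congr rfl fun i _ => h i
    _ = (n : ℝ) := by simp

-- traces
lemma tr_Pf (u w : V) : (∑ i, Pf u w (b i) (b i)) = ⟪u, w⟫ := by
  have : (∑ i, Pf u w (b i) (b i)) = ∑ i, ⟪b i, u⟫ * ⟪b i, w⟫ :=
    Finset.sum_congr rfl fun i _ => by simp
  rw [this, pars]

lemma tr_G : (∑ i, Gf (b i) (b i)) = (n : ℝ) := by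
  have : (∑ i, Gf (b i) (b i)) = ∑ _i : Fin n, (1 : ℝ) :=
    Finset.sum_congr rfl fun i _ => by
      simp [real_inner_self_eq_norm_mul_norm, b.orthonormal.1 i]
  rw [this]; simp

-- base values of secondKind
lemma sk_Pf_Pf (u w u' w' : V) :
    secondKind b R (Pf u w) (Pf u' w') = R u u' w' w := by
  rw [← quad b R u u' w' w]
  exact sum4_congr fun i j k l => by simp; ring

lemma sk_Pf_G (u w : V) :
    secondKind b R (Pf u w) Gf = ∑ k, R u (b k) (b k) w := by
  have h4 : ∀ i j k : Fin n,
      (∑ l, R (b i) (b j) (b k) (b l) * Pf u w (b i) (b l) * Gf (b j) (b k))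
      = R (b i) (b j) (b k) w * (⟪b i, u⟫ * ⟪b j, b k⟫) := by
    intro i j k
    have : (∑ l, R (b i) (b j) (b k) (b l) * Pf u w (b i) (b l) * Gf (b j) (b k))
        = (∑ l, R (b i) (b j) (b k) (b l) * ⟪b l, w⟫) * (⟪b i, u⟫ * ⟪b j, b k⟫) := by
      rw [Finset.sum_mul]
      exact Finset.sum_congr rfl fun l _ => by simp; ring
    rw [this, contract1' b (R (b i) (b j) (b k)) w]
  have h3 : ∀ i j : Fin n,
      (∑ k, R (b i) (b j) (b k) w * (⟪b i, u⟫ * ⟪b j, b k⟫))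
      = R (b i) (b j) (b j) w * ⟪b i, u⟫ := by
    intro i j
    have : (∑ k, R (b i) (b j) (b k) w * (⟪b i, u⟫ * ⟪b j, b k⟫))
        = (∑ k, ((R (b i) (b j)).flip w) (b k) * ⟪b k, b j⟫) * ⟪b i, u⟫ := by
      rw [Finset.sum_mul]
      exact Finset.sum_congr rfl fun k _ => by
        simp [LinearMap.flip_apply, real_inner_comm (b j) (b k)]; ring
    rw [this, contract1' b ((R (b i) (b j)).flip w) (b j)]
    simp [LinearMap.flip_apply]
  have h1 : ∀ j : Fin n, (∑ i, R (b i) (b j) (b j) w * ⟪b i, u⟫)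
      = R u (b j) (b j) w := by
    intro j
    have : (∑ i, R (b i) (b j) (b j) w * ⟪b i, u⟫)
        = ∑ i, (((R.flip (b j)).flip (b j)).flip w) (b i) * ⟪b i, u⟫ :=
      Finset.sum_congr rfl fun i _ => by simp [LinearMap.flip_apply]
    rw [this, contract1' b (((R.flip (b j)).flip (b j)).flip w) u]
    simp [LinearMap.flip_apply]
  calc secondKind b R (Pf u w) Gf
      = ∑ i, ∑ j, ∑ k, R (b i) (b j) (b k) w * (⟪b i, u⟫ * ⟪b j, b k⟫) :=
        sum3_congr fun i j k => h4 i j k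
    _ = ∑ i, ∑ j, R (b i) (b j) (b j) w * ⟪b i, u⟫ := sum2_congr fun i j => h3 i j
    _ = ∑ j, ∑ i, R (b i) (b j) (b j) w * ⟪b i, u⟫ := Finset.sum_comm
    _ = ∑ j, R u (b j) (b j) w := Finset.sum_congr rfl fun j _ => h1 j

lemma sk_G_Pf (u w : V) :
    secondKind b R Gf (Pf u w) = ∑ i, R (b i) u w (b i) := by
  have h4 : ∀ i j k : Fin n,
      (∑ l, R (b i) (b j) (b k) (b l) * Gf (b i) (b l) * Pf u w (b j) (b k))
      = R (b i) (b j) (b k) (b i) * (⟪b j, u⟫ * ⟪b k, w⟫) := by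
    intro i j k
    have : (∑ l, R (b i) (b j) (b k) (b l) * Gf (b i) (b l) * Pf u w (b j) (b k))
        = (∑ l, R (b i) (b j) (b k) (b l) * ⟪b l, b i⟫) * (⟪b j, u⟫ * ⟪b k, w⟫) := by
      rw [Finset.sum_mul]
      exact Finset.sum_congr rfl fun l _ => by
        simp [real_inner_comm (b i) (b l)]; try ring
    rw [this, contract1' b (R (b i) (b j) (b k)) (b i)]
  have h3 : ∀ i j : Fin n,
      (∑ k, R (b i) (b j) (b k) (b i) * (⟪b j, u⟫ * ⟪b k, w⟫))
      = R (b i) (b j) w (b i) * ⟪b j, u⟫ := by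
    intro i j
    have : (∑ k, R (b i) (b j) (b k) (b i) * (⟪b j, u⟫ * ⟪b k, w⟫))
        = (∑ k, ((R (b i) (b j)).flip (b i)) (b k) * ⟪b k, w⟫) * ⟪b j, u⟫ := by
      rw [Finset.sum_mul]
      exact Finset.sum_congr rfl fun k _ => by simp [LinearMap.flip_apply]; ring
    rw [this, contract1' b ((R (b i) (b j)).flip (b i)) w]
    simp [LinearMap.flip_apply]
  have h2 : ∀ i : Fin n, (∑ j, R (b i) (b j) w (b i) * ⟪b j, u⟫)
      = R (b i) u w (b i) := by
    intro i
    have : (∑ j, R (b i) (b j) w (b i) * ⟪b j, u⟫)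
        = ∑ j, (((R (b i)).flip w).flip (b i)) (b j) * ⟪b j, u⟫ :=
      Finset.sum_congr rfl fun j _ => by simp [LinearMap.flip_apply]
    rw [this, contract1' b (((R (b i)).flip w).flip (b i)) u]
    simp [LinearMap.flip_apply]
  calc secondKind b R Gf (Pf u w)
      = ∑ i, ∑ j, ∑ k, R (b i) (b j) (b k) (b i) * (⟪b j, u⟫ * ⟪b k, w⟫) :=
        sum3_congr fun i j k => h4 i j k
    _ = ∑ i, ∑ j, R (b i) (b j) w (b i) * ⟪b j, u⟫ := sum2_congr fun i j => h3 i j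
    _ = ∑ i, R (b i) u w (b i) := Finset.sum_congr rfl fun i _ => h2 i

lemma sk_G_G :
    secondKind b R Gf Gf = ∑ i, ∑ j, R (b i) (b j) (b j) (b i) := by
  have h4 : ∀ i j k : Fin n,
      (∑ l, R (b i) (b j) (b k) (b l) * Gf (b i) (b l) * Gf (b j) (b k))
      = R (b i) (b j) (b k) (b i) * ⟪b j, b k⟫ := by
    intro i j k
    have : (∑ l, R (b i) (b j) (b k) (b l) * Gf (b i) (b l) * Gf (b j) (b k))
        = (∑ l, R (b i) (b j) (b k) (b l) * ⟪b l, b i⟫) * ⟪b j, b k⟫ := by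
      rw [Finset.sum_mul]
      exact Finset.sum_congr rfl fun l _ => by
        simp [real_inner_comm (b i) (b l)]; try ring
    rw [this, contract1' b (R (b i) (b j) (b k)) (b i)]
  have h3 : ∀ i j : Fin n,
      (∑ k, R (b i) (b j) (b k) (b i) * ⟪b j, b k⟫)
      = R (b i) (b j) (b j) (b i) := by
    intro i j
    have : (∑ k, R (b i) (b j) (b k) (b i) * ⟪b j, b k⟫)
        = ∑ k, ((R (b i) (b j)).flip (b i)) (b k) * ⟪b k, b j⟫ :=
      Finset.sum_congr rfl fun k _ => by
        simp [LinearMap.flip_apply, real_inner_comm (b j) (b k)]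
    rw [this, contract1' b ((R (b i) (b j)).flip (b i)) (b j)]
    simp [LinearMap.flip_apply]
  calc secondKind b R Gf Gf
      = ∑ i, ∑ j, ∑ k, R (b i) (b j) (b k) (b i) * ⟪b j, b k⟫ :=
        sum3_congr fun i j k => h4 i j k
    _ = ∑ i, ∑ j, R (b i) (b j) (b j) (b i) := sum2_congr fun i j => h3 i j

lemma trace_indep (B : V →ₗ[ℝ] V →ₗ[ℝ] ℝ) (c : OrthonormalBasis (Fin n) ℝ V) :
    ∑ j, B (c j) (c j) = ∑ j, B (b j) (b j) := by
  have h1 : ∀ j, B (c j) (c j) = ∑ i, B (b i) (c j) * ⟪b i, c j⟫ := by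
    intro j
    have := contract1' b (B.flip (c j)) (c j)
    simp only [LinearMap.flip_apply] at this
    exact this.symm
  calc (∑ j, B (c j) (c j)) = ∑ j, ∑ i, B (b i) (c j) * ⟪b i, c j⟫ :=
        Finset.sum_congr rfl fun j _ => h1 j
    _ = ∑ i, ∑ j, B (b i) (c j) * ⟪b i, c j⟫ := Finset.sum_comm
    _ = ∑ i, B (b i) (b i) := by
        refine Finset.sum_congr rfl fun i _ => ?_
        have h2 : (∑ j, B (b i) (c j) * ⟪b i, c j⟫)
            = ∑ j, B (b i) (c j) * ⟪c j, b i⟫ :=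
          Finset.sum_congr rfl fun j _ => by rw [real_inner_comm (b i) (c j)]
        rw [h2, contract1' c (B (b i)) (b i)]

lemma sum_comb {n : ℕ} (f g : Fin n → ℝ) (p q : ℝ) :
    (∑ i, (p * f i + q * g i)) = p * (∑ i, f i) + q * (∑ i, g i) := by
  rw [Finset.sum_add_distrib, Finset.mul_sum, Finset.mul_sum]

noncomputable def Bv (R : V →ₗ[ℝ] V →ₗ[ℝ] V →ₗ[ℝ] V →ₗ[ℝ] ℝ) (v : V) :
    V →ₗ[ℝ] V →ₗ[ℝ] ℝ :=
  LinearMap.mk₂ ℝ (fun x y => R v x v y)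
    (fun x x' y => by rw [map_add]; simp)
    (fun r x y => by rw [map_smul]; simp)
    (fun x y y' => by rw [map_add])
    (fun r x y => by rw [map_smul]; try simp)

@[simp] lemma Bv_apply (R : V →ₗ[ℝ] V →ₗ[ℝ] V →ₗ[ℝ] V →ₗ[ℝ] ℝ) (v x y : V) :
    Bv R v x y = R v x v y := rfl

lemma key {n : ℕ} (hn : 4 ≤ n) (b : OrthonormalBasis (Fin n) ℝ V)
    (R : V →ₗ[ℝ] V →ₗ[ℝ] V →ₗ[ℝ] V →ₗ[ℝ] ℝ)
    (hR : IsAlgCurvatureTensor R)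
    (hpos : kPosSecondKind b R n) (v : V) (hv : ‖v‖ = 1) :
    scalarCurv b R < (n : ℝ) * ((n : ℝ) + 1) * ricci b R v v := by
  classical
  obtain ⟨h12', hpair, _hb⟩ := hR
  have h12 : ∀ x z w : V, R x x z w = 0 := fun x z w => by
    have := h12' x x z w; linarith
  have h34 : ∀ x y z w : V, R x y z w = - R x y w z := by
    intro x y z w
    calc R x y z w = R z w x y := hpair x y z w
      _ = - R w z x y := h12' z w x y
      _ = - R x y w z := by rw [hpair w z x y]
  have hsw : ∀ x y : V, R y x y x = R x y x y := by
    intro x y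
    calc R y x y x = - R x y y x := h12' y x y x
      _ = - (- R x y x y) := by rw [← h34 x y y x]
      _ = R x y x y := by ring
  haveI : FiniteDimensional ℝ V := Module.Finite.of_basis b.toBasis
  have hrank : Module.finrank ℝ V = n := by
    rw [Module.finrank_eq_card_basis b.toBasis, Fintype.card_fin]
  have hnpos : 0 < n := by omega
  set i0 : Fin n := ⟨0, hnpos⟩ with hi0
  have horth : Orthonormal ℝ (Set.restrict {i0} (fun _ : Fin n => v)) := by
    constructor
    · intro i; exact hv
    · intro i j hij
      exact absurd (Subtype.ext (i.2.trans j.2.symm)) hij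
  obtain ⟨c, hc⟩ := Orthonormal.exists_orthonormalBasis_extension_of_card_eq
    (by rw [hrank, Fintype.card_fin]) horth
  have hc0 : c i0 = v := hc i0 rfl
  have hvv : ⟪v, v⟫ = 1 := by
    rw [real_inner_self_eq_norm_mul_norm, hv]; norm_num
  have hcc : ∀ a a' : Fin n, ⟪c a, c a'⟫ = if a = a' then 1 else 0 :=
    orthonormal_iff_ite.mp c.orthonormal
  have hcv : ∀ a : Fin n, a ≠ i0 → ⟪c a, v⟫ = 0 := by
    intro a ha; rw [← hc0, hcc a i0]; simp [ha]
  have hvc : ∀ a : Fin n, a ≠ i0 → ⟪v, c a⟫ = 0 := fun a ha => by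
    rw [real_inner_comm]; exact hcv a ha
  have hN4 : (4 : ℝ) ≤ (n : ℝ) := by exact_mod_cast hn
  have hN0 : (0 : ℝ) < (n : ℝ) := by linarith
  have hN1 : (0 : ℝ) < (n : ℝ) - 1 := by linarith
  set s : ℝ := (Real.sqrt 2)⁻¹ with hsdef
  have hs2 : s * s = 1 / 2 := by
    rw [hsdef, ← mul_inv, Real.mul_self_sqrt (by norm_num : (0:ℝ) ≤ 2)]
    norm_num
  set al : ℝ := Real.sqrt ((n : ℝ) / ((n : ℝ) - 1)) with haldef
  have hal2 : al * al = (n : ℝ) / ((n : ℝ) - 1) :=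
    Real.mul_self_sqrt (by positivity)
  set off : Fin n → (V →ₗ[ℝ] V →ₗ[ℝ] ℝ) :=
    fun a => s • (Pf v (c a) + Pf (c a) v) with hoff
  set psi : V →ₗ[ℝ] V →ₗ[ℝ] ℝ := al • (Pf v v - ((n : ℝ))⁻¹ • Gf) with hpsi
  set φ : Fin n → (V →ₗ[ℝ] V →ₗ[ℝ] ℝ) :=
    fun a => if a = i0 then psi else off a with hphi
  have hφpsi : ∀ a, a = i0 → φ a = psi := fun a ha => by simp [hphi, ha]
  have hφoff : ∀ a, a ≠ i0 → φ a = off a := fun a ha => by simp [hphi, ha]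
  -- symmetry
  have hsymm_psi : ∀ x y, psi x y = psi y x := by
    intro x y
    simp only [hpsi, LinearMap.smul_apply, LinearMap.sub_apply, Pf_apply, Gf_apply,
      smul_eq_mul]
    rw [real_inner_comm x y]; ring
  have hsymm_off : ∀ a x y, off a x y = off a y x := by
    intro a x y
    simp only [hoff, LinearMap.smul_apply, LinearMap.add_apply, Pf_apply, smul_eq_mul]
    ring
  -- traceless
  have htr_psi : (∑ i, psi (b i) (b i)) = 0 := by
    have e : (∑ i, psi (b i) (b i))
        = al * (∑ i, Pf v v (b i) (b i)) + (-(al * (n : ℝ)⁻¹)) * (∑ i, Gf (b i) (b i)) := by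
      rw [← sum_comb]
      refine Finset.sum_congr rfl fun i _ => ?_
      simp only [hpsi, LinearMap.smul_apply, LinearMap.sub_apply, smul_eq_mul]
      ring
    rw [e, tr_Pf, tr_G, hvv]
    field_simp
    ring
  have htr_off : ∀ a, a ≠ i0 → (∑ i, off a (b i) (b i)) = 0 := by
    intro a ha
    have e : (∑ i, off a (b i) (b i))
        = s * (∑ i, Pf v (c a) (b i) (b i)) + s * (∑ i, Pf (c a) v (b i) (b i)) := by
      rw [← sum_comb]
      refine Finset.sum_congr rfl fun i _ => ?_
      simp only [hoff, LinearMap.smul_apply, LinearMap.add_apply, smul_eq_mul]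
      ring
    rw [e, tr_Pf, tr_Pf, hvc a ha, hcv a ha]
    ring
  have htr : ∀ a, IsTracelessSymForm b (φ a) := by
    intro a
    by_cases ha : a = i0
    · rw [hφpsi a ha]; exact ⟨hsymm_psi, htr_psi⟩
    · rw [hφoff a ha]; exact ⟨hsymm_off a, htr_off a ha⟩
  -- orthonormality
  have hpsipsi : formInner b psi psi = 1 := by
    have e : formInner b psi psi
        = al * al * (⟪v,v⟫ * ⟪v,v⟫ - (n : ℝ)⁻¹ * ⟪v,v⟫ - (n : ℝ)⁻¹ * ⟪v,v⟫
            + (n : ℝ)⁻¹ * (n : ℝ)⁻¹ * (n : ℝ)) := by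
      simp only [hpsi, fi_smul_left, fi_smul_right, fi_sub_left, fi_sub_right,
        fi_Pf_Pf, fi_Pf_G, fi_G_Pf, fi_G_G]
      ring
    rw [e, hvv, hal2]
    field_simp
    ring
  have hpsioff : ∀ a, a ≠ i0 → formInner b psi (off a) = 0 := by
    intro a ha
    have e : formInner b psi (off a)
        = al * s * (⟪v,v⟫ * ⟪v, c a⟫ + ⟪v, c a⟫ * ⟪v,v⟫
            - (n : ℝ)⁻¹ * ⟪v, c a⟫ - (n : ℝ)⁻¹ * ⟪c a, v⟫) := by
      simp only [hpsi, hoff, fi_smul_left, fi_smul_right, fi_add_left, fi_add_right,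
        fi_sub_left, fi_sub_right, fi_Pf_Pf, fi_Pf_G, fi_G_Pf, fi_G_G]
      ring
    rw [e, hvc a ha, hcv a ha]; ring
  have hoffpsi : ∀ a, a ≠ i0 → formInner b (off a) psi = 0 := by
    intro a ha
    have e : formInner b (off a) psi
        = s * al * (⟪v,v⟫ * ⟪c a, v⟫ + ⟪c a, v⟫ * ⟪v,v⟫
            - (n : ℝ)⁻¹ * ⟪v, c a⟫ - (n : ℝ)⁻¹ * ⟪c a, v⟫) := by
      simp only [hpsi, hoff, fi_smul_left, fi_smul_right, fi_add_left, fi_add_right,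
        fi_sub_left, fi_sub_right, fi_Pf_Pf, fi_Pf_G, fi_G_Pf, fi_G_G]
      ring
    rw [e, hvc a ha, hcv a ha]; ring
  have hoffoff : ∀ a a' : Fin n, a ≠ i0 → a' ≠ i0 →
      formInner b (off a) (off a') = if a = a' then 1 else 0 := by
    intro a a' ha ha'
    have e : formInner b (off a) (off a')
        = s * s * (⟪v,v⟫ * ⟪c a, c a'⟫ + ⟪v, c a'⟫ * ⟪c a, v⟫
            + ⟪c a, v⟫ * ⟪v, c a'⟫ + ⟪c a, c a'⟫ * ⟪v,v⟫) := by
      simp only [hoff, fi_smul_left, fi_smul_right, fi_add_left, fi_add_right,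
        fi_Pf_Pf]
      ring
    rw [e, hvv, hvc a' ha', hcv a ha, hcc a a', hs2]
    by_cases h : a = a' <;> simp [h] <;> try norm_num
  have hon : ∀ a a', formInner b (φ a) (φ a') = if a = a' then 1 else 0 := by
    intro a a'
    by_cases ha : a = i0 <;> by_cases ha' : a' = i0
    · rw [hφpsi a ha, hφpsi a' ha', hpsipsi, if_pos (ha.trans ha'.symm)]
    · have hne : a ≠ a' := fun h => ha' (h ▸ ha)
      rw [hφpsi a ha, hφoff a' ha', hpsioff a' ha', if_neg hne]
    · have hne : a ≠ a' := fun h => ha (h.symm ▸ ha')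
      rw [hφoff a ha, hφpsi a' ha', hoffpsi a ha, if_neg hne]
    · rw [hφoff a ha, hφoff a' ha', hoffoff a a' ha ha']
  -- positivity hypothesis applied
  have hsum := hpos φ htr hon
  -- values of secondKind
  have hval : ∀ a, a ≠ i0 → secondKind b R (φ a) (φ a) = R v (c a) v (c a) := by
    intro a ha
    rw [hφoff a ha]
    have e : secondKind b R (off a) (off a)
        = s * s * (R v v (c a) (c a) + R v (c a) v (c a)
            + R (c a) v (c a) v + R (c a) (c a) v v) := by
      simp only [hoff, sk_smul_left, sk_smul_right, sk_add_left, sk_add_right,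
        sk_Pf_Pf]
      ring
    rw [e, h12, h12, hsw v (c a), hs2]
    ring
  have e1 : (∑ k, R v (b k) (b k) v) = - ricci b R v v := by
    unfold ricci
    rw [← Finset.sum_neg_distrib]
    exact Finset.sum_congr rfl fun k _ => h34 v (b k) (b k) v
  have e2 : (∑ i, R (b i) v v (b i)) = - ricci b R v v := by
    unfold ricci
    rw [← Finset.sum_neg_distrib]
    refine Finset.sum_congr rfl fun i _ => ?_
    calc R (b i) v v (b i) = R v (b i) (b i) v := hpair (b i) v v (b i)
      _ = - R v (b i) v (b i) := h34 v (b i) (b i) v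
  have e3 : (∑ i, ∑ j, R (b i) (b j) (b j) (b i)) = - scalarCurv b R := by
    unfold scalarCurv
    rw [← Finset.sum_neg_distrib]
    refine Finset.sum_congr rfl fun i _ => ?_
    rw [← Finset.sum_neg_distrib]
    exact Finset.sum_congr rfl fun j _ => h34 (b i) (b j) (b j) (b i)
  have hpsival : secondKind b R psi psi
      = al * al * (2 * ricci b R v v / (n : ℝ)
          - scalarCurv b R / ((n : ℝ) * (n : ℝ))) := by
    have e : secondKind b R psi psi
        = al * al * (R v v v v - (n : ℝ)⁻¹ * (∑ k, R v (b k) (b k) v)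
            - (n : ℝ)⁻¹ * (∑ i, R (b i) v v (b i))
            + (n : ℝ)⁻¹ * (n : ℝ)⁻¹ * (∑ i, ∑ j, R (b i) (b j) (b j) (b i))) := by
      simp only [hpsi, sk_smul_left, sk_smul_right, sk_sub_left, sk_sub_right,
        sk_Pf_Pf, sk_Pf_G, sk_G_Pf, sk_G_G]
      ring
    rw [e, e1, e2, e3, h12]
    field_simp
    ring
  -- total sum
  have hric : (∑ a, R v (c a) v (c a)) = ricci b R v v := by
    have t1 : (∑ a, R v (c a) v (c a)) = ∑ a, Bv R v (c a) (c a) :=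
      Finset.sum_congr rfl fun a _ => (Bv_apply R v (c a) (c a)).symm
    have t2 : (∑ i, Bv R v (b i) (b i)) = ∑ i, R v (b i) v (b i) :=
      Finset.sum_congr rfl fun i _ => Bv_apply R v (b i) (b i)
    rw [t1, trace_indep b (Bv R v) c, t2]; rfl
  have hsum_eq : (∑ a, secondKind b R (φ a) (φ a))
      = ricci b R v v
        + al * al * (2 * ricci b R v v / (n : ℝ)
            - scalarCurv b R / ((n : ℝ) * (n : ℝ))) := by
    rw [← Finset.sum_erase_add Finset.univ
      (fun a => secondKind b R (φ a) (φ a)) (Finset.mem_univ i0)]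
    have part1 : (∑ a ∈ Finset.univ.erase i0, secondKind b R (φ a) (φ a))
        = ricci b R v v := by
      have q1 : (∑ a ∈ Finset.univ.erase i0, secondKind b R (φ a) (φ a))
          = ∑ a ∈ Finset.univ.erase i0, R v (c a) v (c a) :=
        Finset.sum_congr rfl fun a hmem =>
          hval a (Finset.ne_of_mem_erase hmem)
      have q2 := Finset.sum_erase_add Finset.univ
        (fun a => R v (c a) v (c a)) (Finset.mem_univ i0)
      have q3 : R v (c i0) v (c i0) = 0 := by rw [hc0]; exact h12 v v v
      have q4 : (∑ a ∈ Finset.univ.erase i0, R v (c a) v (c a))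
          = ∑ a, R v (c a) v (c a) := by
        rw [← q2]
        simp [q3]
      rw [q1, q4, hric]
    rw [part1, hφpsi i0 rfl, hpsival]
  rw [hsum_eq, hal2] at hsum
  -- final arithmetic
  have harith : (n : ℝ) * ((n : ℝ) - 1) * (ricci b R v v
      + (n : ℝ) / ((n : ℝ) - 1) * (2 * ricci b R v v / (n : ℝ)
        - scalarCurv b R / ((n : ℝ) * (n : ℝ))))
      = (n : ℝ) * ((n : ℝ) + 1) * ricci b R v v - scalarCurv b R := by
    field_simp
    ring
  have hfin := mul_pos (mul_pos hN0 hN1) hsum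
  rw [harith] at hfin
  linarith

theorem stmt_9 {n : ℕ} (hn : 4 ≤ n)
    (b : OrthonormalBasis (Fin n) ℝ V)
    (R : V →ₗ[ℝ] V →ₗ[ℝ] V →ₗ[ℝ] V →ₗ[ℝ] ℝ)
    (hR : IsAlgCurvatureTensor R)
    (hpos : kPosSecondKind b R n) :
    0 < scalarCurv b R ∧
      ∀ v : V, ‖v‖ = 1 →
        scalarCurv b R / ((n : ℝ) * ((n : ℝ) + 1)) < ricci b R v v := by
  have hk : ∀ v : V, ‖v‖ = 1 →
      scalarCurv b R < (n : ℝ) * ((n : ℝ) + 1) * ricci b R v v :=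
    fun v hv => key hn b R hR hpos v hv
  have hnpos : 0 < n := by omega
  haveI : Nonempty (Fin n) := ⟨⟨0, hnpos⟩⟩
  have hN0 : (0 : ℝ) < (n : ℝ) := by exact_mod_cast hnpos
  have hSsum : (∑ i, ricci b R (b i) (b i)) = scalarCurv b R := rfl
  have hlt : (∑ _i : Fin n, scalarCurv b R)
      < ∑ i, (n : ℝ) * ((n : ℝ) + 1) * ricci b R (b i) (b i) :=
    Finset.sum_lt_sum_of_nonempty Finset.univ_nonempty
      (fun i _ => hk (b i) (b.orthonormal.1 i))
  rw [Finset.sum_const, ← Finset.mul_sum, hSsum] at hlt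
  simp only [Finset.card_univ, Fintype.card_fin, nsmul_eq_mul] at hlt
  have hS : 0 < scalarCurv b R := by
    have h2 : 0 < (n : ℝ) * (n : ℝ) * scalarCurv b R := by nlinarith [hlt]
    by_contra hcon
    push_neg at hcon
    nlinarith [h2, mul_nonneg hN0.le hN0.le]
  refine ⟨hS, fun v hv => ?_⟩
  rw [div_lt_iff₀ (by positivity)]
  nlinarith [hk v hv]
end Aux
end

section
/- Let (V,⟨·,·⟩) be a real inner product space of dimension n ≥ 4 and let R be an algebraic curvature tensor on V having nonnegative curvature operator of the second kind (that is, R̊(φ,φ) ≥ 0 for every traceless symmetric bilinear form φ on V). Then R has nonnegative complex sectional curvature (weakly PIC2): for every orthonormal four-frame {e_1,e_2,e_3,e_4} in V and all λ, μ ∈ [-1,1], one has R_{1313} + λ²R_{1414} + μ²R_{2323} + λ²μ²R_{2424} - 2λμR_{1234} ≥ 0. -/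
open scoped RealInnerProductSpace

variable {V : Type*} [NormedAddCommGroup V] [InnerProductSpace ℝ V]

section Aux

variable {V : Type*} [NormedAddCommGroup V] [InnerProductSpace ℝ V]

/-- The symmetric product of two vectors as a bilinear form. -/
noncomputable def symF (p q : V) : V →ₗ[ℝ] V →ₗ[ℝ] ℝ :=
  LinearMap.mk₂ ℝ (fun x y => (inner ℝ x p : ℝ) * inner ℝ y q + (inner ℝ x q : ℝ) * inner ℝ y p)
    (fun x x' y => by simp [inner_add_left]; ring)
    (fun c x y => by simp [inner_smul_left, smul_eq_mul]; ring)
    (fun x y y' => by simp [inner_add_left]; ring)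
    (fun x c y => by simp [inner_smul_left, smul_eq_mul]; ring)

lemma symF_apply (p q x y : V) :
    symF p q x y = (inner ℝ x p : ℝ) * inner ℝ y q + (inner ℝ x q : ℝ) * inner ℝ y p := rfl

lemma apply_expand {n : ℕ} (b : OrthonormalBasis (Fin n) ℝ V) (T : V →ₗ[ℝ] ℝ) (v : V) :
    T v = ∑ i, (inner ℝ (b i) v : ℝ) * T (b i) := by
  conv_lhs => rw [← b.sum_repr v]
  rw [map_sum]
  refine Finset.sum_congr rfl fun i _ => ?_
  rw [map_smul, smul_eq_mul, b.repr_apply_apply]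

lemma expand4 {n : ℕ} (b : OrthonormalBasis (Fin n) ℝ V)
    (R : V →ₗ[ℝ] V →ₗ[ℝ] V →ₗ[ℝ] V →ₗ[ℝ] ℝ) (x y z w : V) :
    R x y z w = ∑ i, ∑ j, ∑ k, ∑ l,
      (inner ℝ (b i) x : ℝ) * inner ℝ (b j) y * inner ℝ (b k) z * inner ℝ (b l) w
        * R (b i) (b j) (b k) (b l) := by
  have e1 : R x y z w = ∑ i, (inner ℝ (b i) x : ℝ) * R (b i) y z w :=
    apply_expand b (((R.flip y).flip z).flip w) x
  have e2 : ∀ u : V, R u y z w = ∑ j, (inner ℝ (b j) y : ℝ) * R u (b j) z w := fun u =>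
    apply_expand b (((R u).flip z).flip w) y
  have e3 : ∀ u u' : V, R u u' z w = ∑ k, (inner ℝ (b k) z : ℝ) * R u u' (b k) w := fun u u' =>
    apply_expand b ((R u u').flip w) z
  have e4 : ∀ u u' u'' : V, R u u' u'' w
      = ∑ l, (inner ℝ (b l) w : ℝ) * R u u' u'' (b l) := fun u u' u'' =>
    apply_expand b (R u u' u'') w
  rw [e1]
  refine Finset.sum_congr rfl fun i _ => ?_
  rw [e2 (b i), Finset.mul_sum]
  refine Finset.sum_congr rfl fun j _ => ?_
  rw [e3 (b i) (b j), Finset.mul_sum]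
  rw [show (inner ℝ (b i) x : ℝ) * ((inner ℝ (b j) y : ℝ)) = (inner ℝ (b i) x : ℝ) * inner ℝ (b j) y from rfl]
  simp only [Finset.mul_sum]
  refine Finset.sum_congr rfl fun k _ => ?_
  rw [e4 (b i) (b j) (b k)]
  simp only [Finset.mul_sum]
  refine Finset.sum_congr rfl fun l _ => ?_
  ring

lemma secondKind_symF {n : ℕ} (b : OrthonormalBasis (Fin n) ℝ V)
    (R : V →ₗ[ℝ] V →ₗ[ℝ] V →ₗ[ℝ] V →ₗ[ℝ] ℝ) (p q r s : V) :
    secondKind b R (symF p q) (symF r s)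
      = R p r s q + R p s r q + R q r s p + R q s r p := by
  rw [expand4 b R p r s q, expand4 b R p s r q, expand4 b R q r s p, expand4 b R q s r p]
  unfold secondKind
  simp only [← Finset.sum_add_distrib]
  refine Finset.sum_congr rfl fun i _ => Finset.sum_congr rfl fun j _ =>
    Finset.sum_congr rfl fun k _ => Finset.sum_congr rfl fun l _ => ?_
  simp only [symF_apply]
  ring

lemma secondKind_comb {n : ℕ} (b : OrthonormalBasis (Fin n) ℝ V)
    (R : V →ₗ[ℝ] V →ₗ[ℝ] V →ₗ[ℝ] V →ₗ[ℝ] ℝ) (x y : ℝ) (φ₁ φ₂ : V →ₗ[ℝ] V →ₗ[ℝ] ℝ) :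
    secondKind b R (x • φ₁ + y • φ₂) (x • φ₁ + y • φ₂)
      = x * x * secondKind b R φ₁ φ₁ + x * y * secondKind b R φ₁ φ₂
        + y * x * secondKind b R φ₂ φ₁ + y * y * secondKind b R φ₂ φ₂ := by
  unfold secondKind
  simp only [LinearMap.add_apply, LinearMap.smul_apply, smul_eq_mul, Finset.mul_sum,
    ← Finset.sum_add_distrib]
  refine Finset.sum_congr rfl fun i _ => Finset.sum_congr rfl fun j _ =>
    Finset.sum_congr rfl fun k _ => Finset.sum_congr rfl fun l _ => ?_
  ring

lemma traceless_comb {n : ℕ} (b : OrthonormalBasis (Fin n) ℝ V) (x y : ℝ) {p q r s : V}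
    (hpq : (inner ℝ p q : ℝ) = 0) (hrs : (inner ℝ r s : ℝ) = 0) :
    IsTracelessSymForm b (x • symF p q + y • symF r s) := by
  constructor
  · intro u v
    simp only [LinearMap.add_apply, LinearMap.smul_apply, smul_eq_mul, symF_apply]
    ring
  · have hsum : ∀ u v : V, (∑ i, (inner ℝ (b i) u : ℝ) * inner ℝ (b i) v) = inner ℝ u v := by
      intro u v
      rw [← b.sum_inner_mul_inner u v]
      exact Finset.sum_congr rfl fun i _ => by rw [real_inner_comm u (b i)]
    simp only [LinearMap.add_apply, LinearMap.smul_apply, smul_eq_mul, symF_apply]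
    have : ∑ i, (x * ((inner ℝ (b i) p : ℝ) * inner ℝ (b i) q + (inner ℝ (b i) q : ℝ) * inner ℝ (b i) p)
        + y * ((inner ℝ (b i) r : ℝ) * inner ℝ (b i) s + (inner ℝ (b i) s : ℝ) * inner ℝ (b i) r))
        = (2 * x) * (∑ i, (inner ℝ (b i) p : ℝ) * inner ℝ (b i) q)
          + (2 * y) * (∑ i, (inner ℝ (b i) r : ℝ) * inner ℝ (b i) s) := by
      rw [Finset.mul_sum, Finset.mul_sum, ← Finset.sum_add_distrib]
      exact Finset.sum_congr rfl fun i _ => by ring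
    rw [this, hsum p q, hsum r s, hpq, hrs]
    ring

set_option maxHeartbeats 2000000 in
lemma main_id {n : ℕ} (b : OrthonormalBasis (Fin n) ℝ V)
    (R : V →ₗ[ℝ] V →ₗ[ℝ] V →ₗ[ℝ] V →ₗ[ℝ] ℝ) (hR : IsAlgCurvatureTensor R)
    (e : Fin 4 → V) (l m : ℝ) :
    secondKind b R ((1:ℝ) • symF (e 0) (e 2) + (-(l*m)) • symF (e 1) (e 3))
        ((1:ℝ) • symF (e 0) (e 2) + (-(l*m)) • symF (e 1) (e 3))
      + secondKind b R (l • symF (e 0) (e 3) + m • symF (e 1) (e 2))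
        (l • symF (e 0) (e 3) + m • symF (e 1) (e 2))
      = 2 * R (e 0) (e 2) (e 0) (e 2) + 2 * l^2 * R (e 0) (e 3) (e 0) (e 3)
        + 2 * m^2 * R (e 1) (e 2) (e 1) (e 2) + 2 * l^2 * m^2 * R (e 1) (e 3) (e 1) (e 3)
        + 12 * l * m * R (e 0) (e 1) (e 2) (e 3) := by
  obtain ⟨hA1, hP, hBI⟩ := hR
  have hA2 : ∀ x y z w : V, R x y z w = - R x y w z := by
    intro x y z w
    calc R x y z w = R z w x y := hP _ _ _ _
      _ = - R w z x y := hA1 _ _ _ _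
      _ = - R x y w z := by rw [hP w z x y]
  have hz1 : ∀ u z w : V, R u u z w = 0 := by
    intro u z w; have := hA1 u u z w; linarith
  have hz2 : ∀ z w u : V, R z w u u = 0 := by
    intro z w u; rw [hP z w u u]; exact hz1 u z w
  rw [secondKind_comb, secondKind_comb,
    secondKind_symF, secondKind_symF, secondKind_symF, secondKind_symF,
    secondKind_symF, secondKind_symF, secondKind_symF, secondKind_symF]
  -- diagonal facts
  have z1 := hz1 (e 0) (e 2) (e 2); have z2 := hz1 (e 2) (e 0) (e 0)
  have z3 := hz1 (e 1) (e 3) (e 3); have z4 := hz1 (e 3) (e 1) (e 1)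
  have z5 := hz1 (e 0) (e 3) (e 3); have z6 := hz1 (e 3) (e 0) (e 0)
  have z7 := hz1 (e 1) (e 2) (e 2); have z8 := hz1 (e 2) (e 1) (e 1)
  have s1 : R (e 2) (e 0) (e 2) (e 0) = R (e 0) (e 2) (e 0) (e 2) := by
    rw [hA1 (e 2) (e 0) (e 2) (e 0), hA2 (e 0) (e 2) (e 2) (e 0), neg_neg]
  have s2 : R (e 3) (e 1) (e 3) (e 1) = R (e 1) (e 3) (e 1) (e 3) := by
    rw [hA1 (e 3) (e 1) (e 3) (e 1), hA2 (e 1) (e 3) (e 3) (e 1), neg_neg]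
  have s3 : R (e 3) (e 0) (e 3) (e 0) = R (e 0) (e 3) (e 0) (e 3) := by
    rw [hA1 (e 3) (e 0) (e 3) (e 0), hA2 (e 0) (e 3) (e 3) (e 0), neg_neg]
  have s4 : R (e 2) (e 1) (e 2) (e 1) = R (e 1) (e 2) (e 1) (e 2) := by
    rw [hA1 (e 2) (e 1) (e 2) (e 1), hA2 (e 1) (e 2) (e 2) (e 1), neg_neg]
  -- cross-term facts; a := R 0123, b := R 0213
  have c1 : R (e 0) (e 1) (e 3) (e 2) = - R (e 0) (e 1) (e 2) (e 3) :=
    hA2 (e 0) (e 1) (e 3) (e 2)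
  have c4 : R (e 2) (e 3) (e 1) (e 0) = - R (e 0) (e 1) (e 2) (e 3) := by
    rw [hP (e 2) (e 3) (e 1) (e 0)]; exact hA1 (e 1) (e 0) (e 2) (e 3)
  have c5 : R (e 1) (e 0) (e 2) (e 3) = - R (e 0) (e 1) (e 2) (e 3) :=
    hA1 (e 1) (e 0) (e 2) (e 3)
  have c8 : R (e 3) (e 2) (e 0) (e 1) = - R (e 0) (e 1) (e 2) (e 3) := by
    rw [hP (e 3) (e 2) (e 0) (e 1)]; exact hA2 (e 0) (e 1) (e 3) (e 2)
  have c6 : R (e 1) (e 2) (e 0) (e 3)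
      = R (e 0) (e 2) (e 1) (e 3) - R (e 0) (e 1) (e 2) (e 3) := by
    have h := hBI (e 0) (e 1) (e 2) (e 3)
    have h2 := hA1 (e 2) (e 0) (e 1) (e 3)
    linarith
  have c2 : R (e 0) (e 3) (e 1) (e 2)
      = R (e 0) (e 2) (e 1) (e 3) - R (e 0) (e 1) (e 2) (e 3) := by
    rw [hP (e 0) (e 3) (e 1) (e 2)]; exact c6
  have c7 : R (e 3) (e 0) (e 2) (e 1)
      = R (e 0) (e 2) (e 1) (e 3) - R (e 0) (e 1) (e 2) (e 3) := by
    rw [hA1 (e 3) (e 0) (e 2) (e 1), hA2 (e 0) (e 3) (e 2) (e 1), neg_neg]; exact c2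
  have c3 : R (e 2) (e 1) (e 3) (e 0)
      = R (e 0) (e 2) (e 1) (e 3) - R (e 0) (e 1) (e 2) (e 3) := by
    rw [hP (e 2) (e 1) (e 3) (e 0)]; exact c7
  have c9 : R (e 3) (e 1) (e 2) (e 0) = R (e 0) (e 2) (e 1) (e 3) := by
    rw [hP (e 3) (e 1) (e 2) (e 0), hA1 (e 2) (e 0) (e 3) (e 1),
      hA2 (e 0) (e 2) (e 3) (e 1), neg_neg]
  have c10 : R (e 3) (e 2) (e 1) (e 0) = R (e 0) (e 1) (e 2) (e 3) := by
    rw [hP (e 3) (e 2) (e 1) (e 0), hA1 (e 1) (e 0) (e 3) (e 2),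
      hA2 (e 0) (e 1) (e 3) (e 2), neg_neg]
  have c11 : R (e 1) (e 0) (e 3) (e 2) = R (e 0) (e 1) (e 2) (e 3) := by
    rw [hA1 (e 1) (e 0) (e 3) (e 2), hA2 (e 0) (e 1) (e 3) (e 2), neg_neg]
  have c12 : R (e 1) (e 3) (e 0) (e 2) = R (e 0) (e 2) (e 1) (e 3) := by
    rw [hP (e 1) (e 3) (e 0) (e 2)]
  have c13 : R (e 2) (e 0) (e 3) (e 1) = R (e 0) (e 2) (e 1) (e 3) := by
    rw [hA1 (e 2) (e 0) (e 3) (e 1), hA2 (e 0) (e 2) (e 3) (e 1), neg_neg]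
  have c14 : R (e 2) (e 3) (e 0) (e 1) = R (e 0) (e 1) (e 2) (e 3) := by
    rw [hP (e 2) (e 3) (e 0) (e 1)]
  linear_combination (z1 + z2 + s1) + (l*m)^2 * (z3 + z4 + s2) + l^2 * (z5 + z6 + s3)
    + m^2 * (z7 + z8 + s4)
    + (-(l*m)) * (c1 + c2 + c3 + c4 + c5 + c6 + c7 + c8)
    + (l*m) * (c9 + c10 + c11 + c12 + c13 + c14)

end Aux


theorem stmt_15 {n : ℕ} (hn : 4 ≤ n)
    (b : OrthonormalBasis (Fin n) ℝ V)
    (R : V →ₗ[ℝ] V →ₗ[ℝ] V →ₗ[ℝ] V →ₗ[ℝ] ℝ)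
    (hR : IsAlgCurvatureTensor R)
    (hnn : ∀ φ : V →ₗ[ℝ] V →ₗ[ℝ] ℝ, IsTracelessSymForm b φ →
      0 ≤ secondKind b R φ φ) :
    ∀ e : Fin 4 → V, Orthonormal ℝ e →
      ∀ lam ∈ Set.Icc (-1 : ℝ) 1, ∀ mu ∈ Set.Icc (-1 : ℝ) 1,
      0 ≤ R (e 0) (e 2) (e 0) (e 2) + lam ^ 2 * R (e 0) (e 3) (e 0) (e 3)
          + mu ^ 2 * R (e 1) (e 2) (e 1) (e 2)
          + lam ^ 2 * mu ^ 2 * R (e 1) (e 3) (e 1) (e 3)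
          - 2 * lam * mu * R (e 0) (e 1) (e 2) (e 3) := by
  intro e he lam _ mu _
  have h02 : (inner ℝ (e 0) (e 2) : ℝ) = 0 := he.2 (by decide : (0:Fin 4) ≠ 2)
  have h13 : (inner ℝ (e 1) (e 3) : ℝ) = 0 := he.2 (by decide : (1:Fin 4) ≠ 3)
  have h03 : (inner ℝ (e 0) (e 3) : ℝ) = 0 := he.2 (by decide : (0:Fin 4) ≠ 3)
  have h12 : (inner ℝ (e 1) (e 2) : ℝ) = 0 := he.2 (by decide : (1:Fin 4) ≠ 2)
  have hphi := hnn _ (traceless_comb b 1 (-(lam*mu)) h02 h13)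
  have hpsi := hnn _ (traceless_comb b lam mu h03 h12)
  have hphi' := hnn _ (traceless_comb b 1 (-((-lam)*mu)) h02 h13)
  have hpsi' := hnn _ (traceless_comb b (-lam) mu h03 h12)
  have idA := main_id b R hR e lam mu
  have idB := main_id b R hR e (-lam) mu
  have HA : 0 ≤ 2 * R (e 0) (e 2) (e 0) (e 2) + 2 * lam^2 * R (e 0) (e 3) (e 0) (e 3)
      + 2 * mu^2 * R (e 1) (e 2) (e 1) (e 2) + 2 * lam^2 * mu^2 * R (e 1) (e 3) (e 1) (e 3)
      + 12 * lam * mu * R (e 0) (e 1) (e 2) (e 3) := by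
    rw [← idA]; exact add_nonneg hphi hpsi
  have HB0 := add_nonneg hphi' hpsi'
  rw [idB] at HB0
  have HB : 0 ≤ 2 * R (e 0) (e 2) (e 0) (e 2) + 2 * lam^2 * R (e 0) (e 3) (e 0) (e 3)
      + 2 * mu^2 * R (e 1) (e 2) (e 1) (e 2) + 2 * lam^2 * mu^2 * R (e 1) (e 3) (e 1) (e 3)
      - 12 * lam * mu * R (e 0) (e 1) (e 2) (e 3) := by linarith [HB0]
  linarith [HA, HB]
end
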